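/- Almost surely (in the Gaussian randomness of a₁, …, a_m), the second radial derivative satisfies ∂_{ρρ} f(ρ û) > 0 for every ρ > 0 and every unit vector û ∈ S^{n−1}. Moreover, for any fixed constants 0 < c₁ < c₂ < ∞ there exists C₀ > 0 (depending on β, c₁, c₂) such that if m ≥ C₀·n, then with probability at least 1 − C e^{−c m} (for positive constants c, C of the same type) one has ∂_{ρρ} f(ρ û) ≥ α > 0 simultaneously for all c₁ ≤ ρ ≤ c₂ and all û ∈ S^{n−1}, where α > 0 is a constant depending only on c₁, c₂ and β. -/

import Mathlib

open MeasureTheory ProbabilityTheory Real Filter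
open scoped NNReal ENNReal

noncomputable section

/-- The standard Gaussian measure `N(0, I_n)` on `ℝⁿ`. -/
def stdGaussianVec (n : ℕ) : Measure (EuclideanSpace ℝ (Fin n)) :=
  (Measure.pi fun _ : Fin n => gaussianReal 0 1).map
    (MeasurableEquiv.toLp 2 (Fin n → ℝ))

/-- The joint law of `m` i.i.d. standard Gaussian random vectors in `ℝⁿ`. -/
def samples (n m : ℕ) : Measure (Fin m → EuclideanSpace ℝ (Fin n)) :=
  Measure.pi fun _ : Fin m => stdGaussianVec n

/-- The first standard basis vector of `ℝⁿ`. -/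
def e1 (n : ℕ) (hn : 0 < n) : EuclideanSpace ℝ (Fin n) :=
  EuclideanSpace.single ⟨0, hn⟩ 1

/-- The PAM1 empirical loss
`f(u) = (1/m) ∑_j (√(β‖u‖² + ⟨a_j,u⟩²) − √(β‖u‖² + ⟨a_j,x⟩²))²`. -/
def pam1 (β : ℝ) {n m : ℕ} (a : Fin m → EuclideanSpace ℝ (Fin n))
    (x u : EuclideanSpace ℝ (Fin n)) : ℝ :=
  (1 / (m : ℝ)) * ∑ j : Fin m,
    (Real.sqrt (β * ‖u‖ ^ 2 + (inner ℝ (a j) u : ℝ) ^ 2)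
      - Real.sqrt (β * ‖u‖ ^ 2 + (inner ℝ (a j) x : ℝ) ^ 2)) ^ 2

/-- The Hessian quadratic form `ξᵀ ∇²f(u) ξ`. -/
def hess {n : ℕ} (f : EuclideanSpace ℝ (Fin n) → ℝ)
    (u ξ : EuclideanSpace ℝ (Fin n)) : ℝ :=
  iteratedFDeriv ℝ 2 f u ![ξ, ξ]

end

/-! ### Auxiliary analytic lemmas -/

lemma hasDerivAt_Q (β t : ℝ) (hβ : 0 < β) {r : ℝ} (hr : r ≠ 0) :
    HasDerivAt (fun r => Real.sqrt (β*r^2+t^2)) (β*r/Real.sqrt (β*r^2+t^2)) r := by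
  have hpos : 0 < β*r^2+t^2 := by positivity
  have h1 : HasDerivAt (fun r : ℝ => β*r^2+t^2) (β*(2*r)) r := by
    simpa using ((hasDerivAt_pow 2 r).const_mul β).add_const (t^2)
  have h2 := h1.sqrt (ne_of_gt hpos)
  convert h2 using 1
  have : Real.sqrt (β*r^2+t^2) ≠ 0 := by positivity
  field_simp

lemma hasDerivAt_G (β s t : ℝ) (hβ : 0 < β) {r : ℝ} (hr : r ≠ 0) :
    HasDerivAt (fun r => (s*r - Real.sqrt (β*r^2+t^2))^2)
      (2*((s*r - Real.sqrt (β*r^2+t^2))*(s - β*r/Real.sqrt (β*r^2+t^2)))) r := by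
  have h1 : HasDerivAt (fun r : ℝ => s*r - Real.sqrt (β*r^2+t^2))
      (s - β*r/Real.sqrt (β*r^2+t^2)) r := by
    simpa using ((hasDerivAt_id r).const_mul s).fun_sub (hasDerivAt_Q β t hβ hr)
  have h2 := h1.fun_pow 2
  norm_num at h2
  exact h2.congr_deriv (by ring)

lemma hasDerivAt_G1 (β s t : ℝ) (hβ : 0 < β) {ρ : ℝ} (hρ : 0 < ρ) :
    HasDerivAt (fun r => 2*((s*r - Real.sqrt (β*r^2+t^2))*(s - β*r/Real.sqrt (β*r^2+t^2))))
      (2*((s - β*ρ/Real.sqrt (β*ρ^2+t^2))^2 - (s*ρ - Real.sqrt (β*ρ^2+t^2)) *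
        ((β*Real.sqrt (β*ρ^2+t^2) - β*ρ*(β*ρ/Real.sqrt (β*ρ^2+t^2)))/(Real.sqrt (β*ρ^2+t^2))^2))) ρ := by
  have hr : ρ ≠ 0 := ne_of_gt hρ
  set q := Real.sqrt (β*ρ^2+t^2) with hqdef
  have hqpos : 0 < q := by positivity
  have hQ : HasDerivAt (fun r => Real.sqrt (β*r^2+t^2)) (β*ρ/q) ρ := hasDerivAt_Q β t hβ hr
  have hu : HasDerivAt (fun r : ℝ => s*r - Real.sqrt (β*r^2+t^2)) (s - β*ρ/q) ρ := by
    simpa using ((hasDerivAt_id ρ).const_mul s).fun_sub hQ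
  have hfrac : HasDerivAt (fun r : ℝ => β*r/Real.sqrt (β*r^2+t^2))
      ((β*q - β*ρ*(β*ρ/q))/q^2) ρ := by
    have := (((hasDerivAt_id ρ).const_mul β)).fun_div hQ (ne_of_gt hqpos)
    simpa using this
  have hv : HasDerivAt (fun r : ℝ => s - β*r/Real.sqrt (β*r^2+t^2))
      (0 - (β*q - β*ρ*(β*ρ/q))/q^2) ρ := (hasDerivAt_const ρ s).sub hfrac
  have h2 := (hu.fun_mul hv).const_mul 2
  exact h2.congr_deriv (by rw [hqdef]; ring)

lemma key_ineq (β s ρ t q : ℝ) (hq : 0 < q) (hq2 : q^2 = β*ρ^2+t^2) (hβ : 0 < β) :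
    β*t^4*((3/4)*β*ρ^2+t^2)/q^6 ≤
      (s - β*ρ/q)^2 - (s*ρ - q)*((β*q - β*ρ*(β*ρ/q))/q^2) := by
  have hqn : q ≠ 0 := ne_of_gt hq
  rw [div_le_iff₀ (by positivity)]
  have h1 : (s - β*ρ/q)^2 * q^2 = (s*q-β*ρ)^2 := by field_simp
  have h2 : ((β*q - β*ρ*(β*ρ/q))/q^2) * q^3 = β*t^2 := by
    field_simp; linear_combination hq2
  have main : (s*q-β*ρ)^2*q^4 - (s*ρ-q)*(β*t^2)*q^3 - β*t^4*((3/4)*β*ρ^2+t^2)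
      = (s*q^3 - β*ρ*q^2 - ρ*β*t^2/2)^2 := by
    linear_combination (β*t^4+β*q^2*t^2)*hq2
  have hX : ((s - β*ρ/q)^2 - (s*ρ - q)*((β*q - β*ρ*(β*ρ/q))/q^2))*q^6
      = (s - β*ρ/q)^2*q^2*q^4 - (s*ρ-q)*(((β*q - β*ρ*(β*ρ/q))/q^2)*q^3)*q^3 := by ring
  rw [hX, h1, h2]
  nlinarith [sq_nonneg (s*q^3 - β*ρ*q^2 - ρ*β*t^2/2)]

/-- The second radial derivative of the PAM1 loss is bounded below by an explicit
nonnegative quantity depending only on the inner products with the signal. -/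
lemma deriv2_ge (β : ℝ) (hβ : 0 < β) {n m : ℕ} (hn : 0 < n)
    (a : Fin m → EuclideanSpace ℝ (Fin n)) {ρ : ℝ} (hρ : 0 < ρ)
    (uhat : EuclideanSpace ℝ (Fin n)) (hu : ‖uhat‖ = 1) :
    (1/(m:ℝ)) * ∑ j : Fin m, 2*(β*((inner ℝ (a j) (e1 n hn) : ℝ))^4 *
        ((3/4)*β*ρ^2+((inner ℝ (a j) (e1 n hn) : ℝ))^2) /
        (β*ρ^2+((inner ℝ (a j) (e1 n hn) : ℝ))^2)^3)
      ≤ deriv (deriv (fun r : ℝ => pam1 β a (e1 n hn) (r • uhat))) ρ := by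
  set T : Fin m → ℝ := fun j => (inner ℝ (a j) (e1 n hn) : ℝ) with hT
  set S : Fin m → ℝ := fun j => Real.sqrt (β + ((inner ℝ (a j) uhat : ℝ))^2) with hS
  set F : ℝ → ℝ := fun r => (1/(m:ℝ)) * ∑ j : Fin m,
    (S j * r - Real.sqrt (β*r^2 + (T j)^2))^2 with hF
  set F1 : ℝ → ℝ := fun r => (1/(m:ℝ)) * ∑ j : Fin m,
    (2*((S j * r - Real.sqrt (β*r^2+(T j)^2))*(S j - β*r/Real.sqrt (β*r^2+(T j)^2)))) with hF1
  have hEq : (fun r : ℝ => pam1 β a (e1 n hn) (r • uhat)) =ᶠ[nhds ρ] F := by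
    filter_upwards [Ioi_mem_nhds hρ] with r hr
    simp only [pam1, hF]
    congr 1
    refine Finset.sum_congr rfl fun j _ => ?_
    have hnrm : ‖r • uhat‖^2 = r^2 := by
      rw [norm_smul, hu]
      simp [mul_pow, sq_abs]
    have hin : (inner ℝ (a j) (r • uhat) : ℝ) = r * (inner ℝ (a j) uhat : ℝ) :=
      real_inner_smul_right _ _ _
    rw [hnrm, hin, show β*r^2 + (r * (inner ℝ (a j) uhat : ℝ))^2
          = (β + ((inner ℝ (a j) uhat : ℝ))^2) * r^2 by ring,
      Real.sqrt_mul (by positivity), Real.sqrt_sq (le_of_lt hr)]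
  have hstep1 : deriv (deriv (fun r : ℝ => pam1 β a (e1 n hn) (r • uhat))) ρ
      = deriv (deriv F) ρ := (hEq.deriv).deriv_eq
  have hFd : ∀ r ∈ Set.Ioi (0:ℝ), HasDerivAt F (F1 r) r := by
    intro r hr
    exact (HasDerivAt.fun_sum fun j _ => hasDerivAt_G β (S j) (T j) hβ (ne_of_gt hr)).const_mul _
  have hDF : deriv F =ᶠ[nhds ρ] F1 := by
    filter_upwards [Ioi_mem_nhds hρ] with r hr using (hFd r hr).deriv
  have hstep2 : deriv (deriv F) ρ = deriv F1 ρ := hDF.deriv_eq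
  have hF1d : HasDerivAt F1 ((1/(m:ℝ)) * ∑ j : Fin m,
      (2*((S j - β*ρ/Real.sqrt (β*ρ^2+(T j)^2))^2 - (S j*ρ - Real.sqrt (β*ρ^2+(T j)^2)) *
        ((β*Real.sqrt (β*ρ^2+(T j)^2) - β*ρ*(β*ρ/Real.sqrt (β*ρ^2+(T j)^2)))
          /(Real.sqrt (β*ρ^2+(T j)^2))^2)))) ρ :=
    (HasDerivAt.fun_sum fun j _ => hasDerivAt_G1 β (S j) (T j) hβ hρ).const_mul _
  rw [hstep1, hstep2, hF1d.deriv]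
  have hm0 : (0:ℝ) ≤ 1/(m:ℝ) := by positivity
  refine mul_le_mul_of_nonneg_left (Finset.sum_le_sum fun j _ => ?_) hm0
  have hqpos : 0 < Real.sqrt (β*ρ^2+(T j)^2) := by positivity
  have hq2 : (Real.sqrt (β*ρ^2+(T j)^2))^2 = β*ρ^2+(T j)^2 :=
    Real.sq_sqrt (by positivity)
  have h6 : (β*ρ^2+(T j)^2)^3 = (Real.sqrt (β*ρ^2+(T j)^2))^6 := by
    rw [show (6:ℕ) = 2*3 from rfl, pow_mul, hq2]
  rw [h6]
  have := key_ineq β (S j) ρ (T j) (Real.sqrt (β*ρ^2+(T j)^2)) hqpos hq2 hβ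
  linarith

/-! ### Auxiliary measure-theoretic lemmas -/

instance (n : ℕ) : IsProbabilityMeasure (stdGaussianVec n) :=
  Measure.isProbabilityMeasure_map (Measurable.aemeasurable (MeasurableEquiv.measurable _))

instance (n m : ℕ) : IsProbabilityMeasure (samples n m) := by
  unfold samples; infer_instance

lemma stdGaussianVec_inner_e1 (n : ℕ) (hn : 0 < n) (I : Set ℝ) :
    stdGaussianVec n {v | (inner ℝ v (e1 n hn) : ℝ) ∈ I} = gaussianReal 0 1 I := by
  have hset : ∀ v : EuclideanSpace ℝ (Fin n), (inner ℝ v (e1 n hn) : ℝ) = v ⟨0, hn⟩ := by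
    intro v
    simp [e1, EuclideanSpace.inner_single_right]
  rw [stdGaussianVec, MeasurableEquiv.map_apply]
  have happ : ∀ (x : Fin n → ℝ) (i : Fin n),
      (MeasurableEquiv.toLp 2 (Fin n → ℝ)) x i = x i := fun _ _ => rfl
  have : (MeasurableEquiv.toLp 2 (Fin n → ℝ)) ⁻¹' {v | (inner ℝ v (e1 n hn) : ℝ) ∈ I}
      = Set.pi Set.univ (fun i : Fin n => if i = ⟨0, hn⟩ then I else Set.univ) := by
    ext x
    simp only [Set.mem_preimage, Set.mem_setOf_eq, hset, happ, Set.mem_pi, Set.mem_univ,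
      true_implies]
    constructor
    · intro h i
      by_cases hi : i = ⟨0, hn⟩ <;> simp [hi, h]
    · intro h
      have := h ⟨0, hn⟩
      simpa using this
  rw [this, Measure.pi_pi]
  rw [Finset.prod_eq_single (⟨0, hn⟩ : Fin n)]
  · simp
  · intro b _ hb; simp [hb]
  · simp

lemma samples_cylinder (n m : ℕ) (B : Set (EuclideanSpace ℝ (Fin n)))
    (J : Finset (Fin m)) :
    samples n m {a | ∀ j ∈ J, a j ∈ B} = (stdGaussianVec n B) ^ J.card := by
  have : {a : Fin m → EuclideanSpace ℝ (Fin n) | ∀ j ∈ J, a j ∈ B}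
      = Set.pi Set.univ (fun j : Fin m => if j ∈ J then B else Set.univ) := by
    ext a
    simp only [Set.mem_setOf_eq, Set.mem_pi, Set.mem_univ, true_implies]
    constructor
    · intro h j; by_cases hj : j ∈ J <;> simp [hj, h]
    · intro h j hj; have := h j; simpa [hj] using this
  rw [samples, this, Measure.pi_pi]
  rw [show (fun j : Fin m => stdGaussianVec n (if j ∈ J then B else Set.univ))
      = fun j : Fin m => if j ∈ J then stdGaussianVec n B else 1 from ?_]
  · rw [Finset.prod_ite_mem, Finset.univ_inter, Finset.prod_const]
  · ext j; by_cases hj : j ∈ J <;> simp [hj]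

lemma gaussianPDF_le (x : ℝ) : gaussianPDF 0 1 x ≤ ENNReal.ofReal (2/5) := by
  rw [gaussianPDF]
  apply ENNReal.ofReal_le_ofReal
  rw [gaussianPDFReal]
  have h1 : Real.exp (-(x-0)^2/(2*((1:ℝ≥0):ℝ))) ≤ 1 := by
    apply Real.exp_le_one_iff.mpr
    rw [NNReal.coe_one]
    have : (0:ℝ) ≤ (x-0)^2 := sq_nonneg _
    nlinarith
  have h2 : ((Real.sqrt (2*Real.pi*((1:ℝ≥0):ℝ)))⁻¹ : ℝ) ≤ 2/5 := by
    rw [NNReal.coe_one, mul_one]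
    rw [inv_le_comm₀ (Real.sqrt_pos.mpr (by positivity)) (by norm_num)]
    rw [show ((2:ℝ)/5)⁻¹ = 5/2 by norm_num]
    rw [Real.le_sqrt (by norm_num : (0:ℝ) ≤ 5/2)]
    · nlinarith [Real.pi_gt_d6]
    · positivity
  have h0 : (0:ℝ) ≤ (Real.sqrt (2*Real.pi*((1:ℝ≥0):ℝ)))⁻¹ := by positivity
  calc (Real.sqrt (2*Real.pi*((1:ℝ≥0):ℝ)))⁻¹ * Real.exp (-(x-0)^2/(2*((1:ℝ≥0):ℝ)))
      ≤ (Real.sqrt (2*Real.pi*((1:ℝ≥0):ℝ)))⁻¹ * 1 := by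
        exact mul_le_mul_of_nonneg_left h1 h0
    _ ≤ 2/5 := by rw [mul_one]; exact h2

lemma gauss_small : gaussianReal 0 1 {x : ℝ | x^2 < 1/100} ≤ ENNReal.ofReal (2/25) := by
  have hsub : {x : ℝ | x^2 < 1/100} ⊆ Set.Ioo (-(1/10)) (1/10) := by
    intro x hx
    simp only [Set.mem_setOf_eq] at hx
    constructor <;> nlinarith
  calc gaussianReal 0 1 {x : ℝ | x^2 < 1/100} ≤ gaussianReal 0 1 (Set.Ioo (-(1/10)) (1/10)) :=
      measure_mono hsub
    _ = ∫⁻ x in Set.Ioo (-(1/10)) (1/10), gaussianPDF 0 1 x := gaussianReal_apply 0 one_ne_zero _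
    _ ≤ ∫⁻ _x in Set.Ioo (-(1/10):ℝ) (1/10), ENNReal.ofReal (2/5) :=
      lintegral_mono (fun x => gaussianPDF_le x)
    _ = ENNReal.ofReal (2/5) * volume (Set.Ioo (-(1/10):ℝ) (1/10)) := setLIntegral_const _ _
    _ = ENNReal.ofReal (2/25) := by
        rw [Real.volume_Ioo, ← ENNReal.ofReal_mul (by norm_num)]
        norm_num

lemma gauss_singleton : gaussianReal 0 1 ({0} : Set ℝ) = 0 := by
  rw [gaussianReal_apply 0 one_ne_zero]
  exact setLIntegral_measure_zero _ _ Real.volume_singleton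

/-! ### Auxiliary elementary lemmas -/

lemma L_ge (β ρ t c₂ : ℝ) (hβ : 0 < β) (hρ2 : ρ^2 ≤ c₂^2)
    (ht : 1/100 ≤ t^2) (hc₂ : 0 < c₂) :
    β*((1/100)/(β*c₂^2+1/100))^3 ≤ β*t^4*((3/4)*β*ρ^2+t^2)/(β*ρ^2+t^2)^3 := by
  have hD : 0 < β*ρ^2+t^2 := by nlinarith
  have hD2 : 0 < β*c₂^2+1/100 := by positivity
  have key : (1/100)/(β*c₂^2+1/100) ≤ t^2/(β*ρ^2+t^2) := by
    rw [div_le_div_iff₀ hD2 hD]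
    nlinarith [mul_le_mul_of_nonneg_left hρ2 hβ.le,
      mul_le_mul_of_nonneg_left ht (mul_nonneg hβ.le (sq_nonneg c₂))]
  have h3 : ((1/100)/(β*c₂^2+1/100))^3 ≤ (t^2/(β*ρ^2+t^2))^3 :=
    pow_le_pow_left₀ (by positivity) key 3
  have h4 : β*(t^2/(β*ρ^2+t^2))^3 ≤ β*t^4*((3/4)*β*ρ^2+t^2)/(β*ρ^2+t^2)^3 := by
    rw [div_pow, ← mul_div_assoc]
    apply div_le_div_of_nonneg_right ?_ (by positivity)
    · nlinarith [mul_nonneg (mul_nonneg (mul_nonneg hβ.le hβ.le) (sq_nonneg (t^2))) (sq_nonneg ρ)]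
  calc β*((1/100)/(β*c₂^2+1/100))^3 ≤ β*(t^2/(β*ρ^2+t^2))^3 := by nlinarith
    _ ≤ _ := h4

lemma choose_le_two_pow (m k : ℕ) : (m.choose k) ≤ 2^m := by
  by_cases hk : k ≤ m
  · calc m.choose k ≤ ∑ i ∈ Finset.range (m+1), m.choose i :=
        Finset.single_le_sum (fun i _ => Nat.zero_le _)
          (Finset.mem_range.mpr (Nat.lt_succ_of_le hk))
    _ = 2^m := Nat.sum_range_choose m
  · rw [Nat.choose_eq_zero_of_lt (Nat.lt_of_not_le hk)]; exact Nat.zero_le _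

lemma count_exp (m k : ℕ) (hk : m ≤ 2*k) :
    (m.choose k : ℝ) * (2/25)^k ≤ Real.exp (-(1/2) * m) := by
  have h1 : (m.choose k : ℝ) ≤ 2^m := by exact_mod_cast choose_le_two_pow m k
  have hpos : (0:ℝ) ≤ (2/25:ℝ)^k := by positivity
  have base : (8/25:ℝ) ≤ Real.exp (-1) := by
    rw [Real.exp_neg, le_inv_comm₀ (by norm_num) (Real.exp_pos 1)]
    calc Real.exp 1 ≤ 2.7182818286 := (Real.exp_one_lt_d9).le
      _ ≤ ((8:ℝ)/25)⁻¹ := by norm_num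
  refine le_of_pow_le_pow_left₀ (n := 2) two_ne_zero (Real.exp_pos _).le ?_
  have e1 : ((m.choose k : ℝ) * (2/25)^k)^2 ≤ (2^m * (2/25)^k)^2 := by
    have h0 : (0:ℝ) ≤ (m.choose k : ℝ) * (2/25)^k := by positivity
    have h2 : (m.choose k : ℝ) * (2/25)^k ≤ 2^m * (2/25)^k :=
      mul_le_mul_of_nonneg_right h1 hpos
    nlinarith
  have e2 : ((2:ℝ)^m * (2/25)^k)^2 = 4^m * (2/25)^(2*k) := by
    rw [mul_pow, ← pow_mul, ← pow_mul, show (4:ℝ) = 2^2 by norm_num, ← pow_mul]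
    ring_nf
  have e3 : ((2:ℝ)/25)^(2*k) ≤ (2/25)^m :=
    pow_le_pow_of_le_one (by norm_num) (by norm_num) hk
  have e4 : (4:ℝ)^m * (2/25)^m = (8/25)^m := by
    rw [← mul_pow]; norm_num
  have e5 : ((8:ℝ)/25)^m ≤ (Real.exp (-1))^m :=
    pow_le_pow_left₀ (by norm_num) base m
  have e6 : (Real.exp (-1))^m = Real.exp (-(m:ℝ)) := by
    rw [← Real.exp_nat_mul]; norm_num
  have e7 : (Real.exp (-(1/2) * m))^2 = Real.exp (-(m:ℝ)) := by
    rw [sq, ← Real.exp_add]; ring_nf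
  rw [e7]
  calc ((m.choose k : ℝ) * (2/25)^k)^2 ≤ (2^m * (2/25)^k)^2 := e1
    _ = 4^m * (2/25)^(2*k) := e2
    _ ≤ 4^m * (2/25)^m := by
        apply mul_le_mul_of_nonneg_left e3 (by positivity)
    _ = (8/25)^m := e4
    _ ≤ (Real.exp (-1))^m := e5
    _ = Real.exp (-(m:ℝ)) := e6

lemma term_nonneg (β ρ t : ℝ) (hβ : 0 < β) :
    0 ≤ 2*(β*t^4*((3/4)*β*ρ^2+t^2)/(β*ρ^2+t^2)^3) := by
  have h2 : (0:ℝ) ≤ β*ρ^2 := mul_nonneg hβ.le (sq_nonneg ρ)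
  have hnum : (0:ℝ) ≤ β*t^4*((3/4)*β*ρ^2+t^2) := by
    apply mul_nonneg (mul_nonneg hβ.le (by positivity))
    nlinarith [sq_nonneg t]
  have hden : (0:ℝ) ≤ (β*ρ^2+t^2)^3 := by
    apply pow_nonneg; nlinarith [sq_nonneg t]
  positivity

/-! ### Main theorem -/

/-- the second radial derivative of the PAM1 loss is almost surely
positive for all `ρ > 0`, and uniformly bounded below on `c₁ ≤ ρ ≤ c₂`
with high probability. -/
theorem pam1_second_radial_deriv_pos (β : ℝ) (hβ : 0 < β) :
    (∀ (n m : ℕ) (hn : 0 < n), 0 < m →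
      ∀ᵐ a ∂(samples n m), ∀ ρ : ℝ, 0 < ρ →
        ∀ uhat : EuclideanSpace ℝ (Fin n), ‖uhat‖ = 1 →
          0 < deriv (deriv (fun r : ℝ => pam1 β a (e1 n hn) (r • uhat))) ρ) ∧
    (∀ c₁ c₂ : ℝ, 0 < c₁ → c₁ < c₂ →
      ∃ C₀ α c C : ℝ, 0 < C₀ ∧ 0 < α ∧ 0 < c ∧ 0 < C ∧
        ∀ (n m : ℕ) (hn : 0 < n), 0 < m → (m : ℝ) ≥ C₀ * n →
          samples n m {a : Fin m → EuclideanSpace ℝ (Fin n) |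
              ∀ ρ : ℝ, c₁ ≤ ρ → ρ ≤ c₂ →
                ∀ uhat : EuclideanSpace ℝ (Fin n), ‖uhat‖ = 1 →
                  α ≤ deriv (deriv (fun r : ℝ => pam1 β a (e1 n hn) (r • uhat))) ρ}
            ≥ ENNReal.ofReal (1 - C * Real.exp (-c * m))) := by
  constructor
  · -- Part 1: almost sure strict positivity
    intro n m hn hm
    have hzero : samples n m
        {a : Fin m → EuclideanSpace ℝ (Fin n) | (inner ℝ (a ⟨0, hm⟩) (e1 n hn) : ℝ) = 0} = 0 := by
      have hset : {a : Fin m → EuclideanSpace ℝ (Fin n) | (inner ℝ (a ⟨0, hm⟩) (e1 n hn) : ℝ) = 0}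
          = {a | ∀ j ∈ ({⟨0, hm⟩} : Finset (Fin m)), a j ∈
              {v : EuclideanSpace ℝ (Fin n) | (inner ℝ v (e1 n hn) : ℝ) ∈ ({0} : Set ℝ)}} := by
        ext a; simp
      rw [hset, samples_cylinder, stdGaussianVec_inner_e1 n hn, gauss_singleton]
      simp
    have hae : ∀ᵐ a ∂samples n m, (inner ℝ (a ⟨0, hm⟩) (e1 n hn) : ℝ) ≠ 0 := by
      rw [ae_iff]
      convert hzero using 2
      ext a
      simp
    filter_upwards [hae] with a ha ρ hρ uhat hu
    refine lt_of_lt_of_le ?_ (deriv2_ge β hβ hn a hρ uhat hu)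
    have hmpos : (0:ℝ) < 1/(m:ℝ) := by
      have : (0:ℝ) < (m:ℝ) := by exact_mod_cast hm
      positivity
    apply mul_pos hmpos
    apply Finset.sum_pos'
    · intro j _
      exact term_nonneg β ρ _ hβ
    · refine ⟨⟨0, hm⟩, Finset.mem_univ _, ?_⟩
      set t := (inner ℝ (a ⟨0, hm⟩) (e1 n hn) : ℝ)
      have ht2 : 0 < t^2 := pow_two_pos_of_ne_zero ha
      have ht4 : 0 < t^4 := by nlinarith
      have hβρ : 0 < β*ρ^2 := mul_pos hβ (by positivity)
      have hnum : 0 < β*t^4*((3/4)*β*ρ^2+t^2) := by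
        apply mul_pos (mul_pos hβ ht4); nlinarith
      have hden : 0 < (β*ρ^2+t^2)^3 := by
        apply pow_pos; nlinarith
      have := div_pos hnum hden
      linarith
  · -- Part 2: uniform lower bound with high probability
    intro c₁ c₂ hc₁ hc12
    have hc₂ : 0 < c₂ := lt_trans hc₁ hc12
    have hDen : (0:ℝ) < β*c₂^2+1/100 := by positivity
    refine ⟨1, β*((1/100)/(β*c₂^2+1/100))^3, 1/2, 1, by norm_num, ?_, by norm_num, by norm_num, ?_⟩
    · apply mul_pos hβ
      apply pow_pos
      apply div_pos (by norm_num) hDen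
    intro n m hn hm _hmn
    set α := β*((1/100)/(β*c₂^2+1/100))^3 with hα
    have hαpos : 0 < α := by
      apply mul_pos hβ; apply pow_pos; apply div_pos (by norm_num) hDen
    set k := (m+1)/2 with hk
    set B : Set (EuclideanSpace ℝ (Fin n)) :=
      {v | ((inner ℝ v (e1 n hn) : ℝ))^2 < 1/100} with hB
    have hBmeas : MeasurableSet B := by
      have hcont : Continuous fun v : EuclideanSpace ℝ (Fin n) =>
          ((inner ℝ v (e1 n hn) : ℝ))^2 := (continuous_id.inner continuous_const).pow 2
      exact measurableSet_lt hcont.measurable measurable_const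
    set bad := ⋃ J ∈ (Finset.powersetCard k (Finset.univ : Finset (Fin m))),
      {a : Fin m → EuclideanSpace ℝ (Fin n) | ∀ j ∈ J, a j ∈ B} with hbad
    have hbadmeas : MeasurableSet bad := by
      apply MeasurableSet.biUnion (Finset.powersetCard k Finset.univ).countable_toSet
      intro J _
      have : {a : Fin m → EuclideanSpace ℝ (Fin n) | ∀ j ∈ J, a j ∈ B}
          = ⋂ j ∈ J, (fun a : Fin m → EuclideanSpace ℝ (Fin n) => a j) ⁻¹' B := by
        ext a; simp
      rw [this]
      exact MeasurableSet.biInter J.countable_toSet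
        (fun j _ => (measurable_pi_apply j) hBmeas)
    classical
    -- the good event implies the uniform bound
    have hgood : badᶜ ⊆ {a : Fin m → EuclideanSpace ℝ (Fin n) |
        ∀ ρ : ℝ, c₁ ≤ ρ → ρ ≤ c₂ →
          ∀ uhat : EuclideanSpace ℝ (Fin n), ‖uhat‖ = 1 →
            α ≤ deriv (deriv (fun r : ℝ => pam1 β a (e1 n hn) (r • uhat))) ρ} := by
      intro a ha
      intro ρ hρ1 hρ2 uhat hu
      have h0ρ : 0 < ρ := lt_of_lt_of_le hc₁ hρ1
      set P : Fin m → Prop := fun j => ((inner ℝ (a j) (e1 n hn) : ℝ))^2 < 1/100 with hP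
      have hBf : (Finset.univ.filter P).card < k := by
        by_contra hcon
        push_neg at hcon
        obtain ⟨J, hJsub, hJcard⟩ := Finset.exists_subset_card_eq hcon
        apply ha
        simp only [hbad, Set.mem_iUnion]
        refine ⟨J, Finset.mem_powersetCard.mpr ⟨Finset.subset_univ _, hJcard⟩, ?_⟩
        intro j hj
        exact (Finset.mem_filter.mp (hJsub hj)).2
      have hcards := Finset.card_filter_add_card_filter_not
        (s := (Finset.univ : Finset (Fin m))) (p := P)
      have hcardm : (Finset.univ : Finset (Fin m)).card = m := by
        simp
      have hGnat : m ≤ 2 * (Finset.univ.filter (fun j => ¬ P j)).card := by omega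
      have hG : (m:ℝ) ≤ 2 * ((Finset.univ.filter (fun j => ¬ P j)).card : ℝ) := by
        exact_mod_cast hGnat
      refine le_trans ?_ (deriv2_ge β hβ hn a h0ρ uhat hu)
      have hms : (0:ℝ) < (m:ℝ) := by exact_mod_cast hm
      -- per-sample lower bound on the good coordinates
      have hterm : ∀ j ∈ Finset.univ.filter (fun j => ¬ P j),
          2*α ≤ 2*(β*((inner ℝ (a j) (e1 n hn) : ℝ))^4 *
            ((3/4)*β*ρ^2+((inner ℝ (a j) (e1 n hn) : ℝ))^2) /
            (β*ρ^2+((inner ℝ (a j) (e1 n hn) : ℝ))^2)^3) := by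
        intro j hj
        have hPj : ¬ P j := (Finset.mem_filter.mp hj).2
        have ht : 1/100 ≤ ((inner ℝ (a j) (e1 n hn) : ℝ))^2 := le_of_not_gt hPj
        have hρsq : ρ^2 ≤ c₂^2 := by nlinarith
        have := L_ge β ρ ((inner ℝ (a j) (e1 n hn) : ℝ)) c₂ hβ hρsq ht hc₂
        rw [hα]; linarith
      have hsum2 : ((Finset.univ.filter (fun j => ¬ P j)).card : ℝ) * (2*α)
          ≤ ∑ j ∈ Finset.univ.filter (fun j => ¬ P j),
            2*(β*((inner ℝ (a j) (e1 n hn) : ℝ))^4 *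
              ((3/4)*β*ρ^2+((inner ℝ (a j) (e1 n hn) : ℝ))^2) /
              (β*ρ^2+((inner ℝ (a j) (e1 n hn) : ℝ))^2)^3) := by
        calc ((Finset.univ.filter (fun j => ¬ P j)).card : ℝ) * (2*α)
            = ∑ _j ∈ Finset.univ.filter (fun j => ¬ P j), 2*α := by
              rw [Finset.sum_const, nsmul_eq_mul]
          _ ≤ _ := Finset.sum_le_sum hterm
      have hsum1 : ∑ j ∈ Finset.univ.filter (fun j => ¬ P j),
            2*(β*((inner ℝ (a j) (e1 n hn) : ℝ))^4 *
              ((3/4)*β*ρ^2+((inner ℝ (a j) (e1 n hn) : ℝ))^2) /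
              (β*ρ^2+((inner ℝ (a j) (e1 n hn) : ℝ))^2)^3)
          ≤ ∑ j : Fin m, 2*(β*((inner ℝ (a j) (e1 n hn) : ℝ))^4 *
              ((3/4)*β*ρ^2+((inner ℝ (a j) (e1 n hn) : ℝ))^2) /
              (β*ρ^2+((inner ℝ (a j) (e1 n hn) : ℝ))^2)^3) :=
        Finset.sum_le_sum_of_subset_of_nonneg (Finset.filter_subset _ _)
          (fun j _ _ => term_nonneg β ρ _ hβ)
      have htot : (m:ℝ)*α ≤ ∑ j : Fin m, 2*(β*((inner ℝ (a j) (e1 n hn) : ℝ))^4 *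
              ((3/4)*β*ρ^2+((inner ℝ (a j) (e1 n hn) : ℝ))^2) /
              (β*ρ^2+((inner ℝ (a j) (e1 n hn) : ℝ))^2)^3) := by
        nlinarith
      rw [show α = (1/(m:ℝ)) * ((m:ℝ)*α) by field_simp]
      exact mul_le_mul_of_nonneg_left htot (by positivity)
    -- probability of the bad event
    have hk2 : m ≤ 2*k := by omega
    have hbad_le : samples n m bad ≤ ENNReal.ofReal (Real.exp (-(1/2)*m)) := by
      have hcount : ∀ J ∈ Finset.powersetCard k (Finset.univ : Finset (Fin m)),
          samples n m {a : Fin m → EuclideanSpace ℝ (Fin n) | ∀ j ∈ J, a j ∈ B}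
            = (stdGaussianVec n B)^k := by
        intro J hJ
        rw [samples_cylinder, (Finset.mem_powersetCard.mp hJ).2]
      have hBle : stdGaussianVec n B ≤ ENNReal.ofReal (2/25) := by
        have : B = {v : EuclideanSpace ℝ (Fin n) |
            (inner ℝ v (e1 n hn) : ℝ) ∈ {x : ℝ | x^2 < 1/100}} := rfl
        rw [this, stdGaussianVec_inner_e1 n hn]
        exact gauss_small
      calc samples n m bad
          ≤ ∑ J ∈ Finset.powersetCard k (Finset.univ : Finset (Fin m)),
            samples n m {a : Fin m → EuclideanSpace ℝ (Fin n) | ∀ j ∈ J, a j ∈ B} :=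
            measure_biUnion_finset_le _ _
        _ = ∑ _J ∈ Finset.powersetCard k (Finset.univ : Finset (Fin m)),
            (stdGaussianVec n B)^k := Finset.sum_congr rfl hcount
        _ = ((Finset.powersetCard k (Finset.univ : Finset (Fin m))).card : ℝ≥0∞)
            * (stdGaussianVec n B)^k := by
            rw [Finset.sum_const, nsmul_eq_mul]
        _ ≤ ((m.choose k : ℕ) : ℝ≥0∞) * (ENNReal.ofReal (2/25))^k := by
            apply mul_le_mul'
            · apply le_of_eq
              rw [Finset.card_powersetCard]
              simp
            · exact pow_le_pow_left' hBle k
        _ = ENNReal.ofReal ((m.choose k : ℝ) * (2/25)^k) := by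
            rw [ENNReal.ofReal_mul (by positivity), ← ENNReal.ofReal_pow (by norm_num)]
            congr 1
            exact (ENNReal.ofReal_natCast _).symm
        _ ≤ ENNReal.ofReal (Real.exp (-(1/2)*m)) :=
            ENNReal.ofReal_le_ofReal (count_exp m k hk2)
    calc ENNReal.ofReal (1 - 1 * Real.exp (-(1/2) * (m:ℝ)))
        = 1 - ENNReal.ofReal (Real.exp (-(1/2) * (m:ℝ))) := by
          rw [one_mul, ENNReal.ofReal_sub _ (Real.exp_pos _).le, ENNReal.ofReal_one]
      _ ≤ 1 - samples n m bad := tsub_le_tsub_left hbad_le 1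
      _ = samples n m badᶜ := (prob_compl_eq_one_sub hbadmeas).symm
      _ ≤ _ := measure_mono hgood
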